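/- Let A be a submonoid of a commutative monoid B such that B is algebraic over A, i.e., for every b ∈ B there exists n ≥ 1 with b^n ∈ A. Then the monoid algebra ℤ[B] (MonoidAlgebra ℤ B) is integral over the subring ℤ[A], the image of MonoidAlgebra ℤ A under the ring homomorphism induced by the inclusion A → B; i.e., every element of ℤ[B] satisfies a monic polynomial with coefficients in ℤ[A]. -/

import Mathlib

/-- If `B` is algebraic over its submonoid `A` (every `b ∈ B` has a positive
power in `A`), then `ℤ[B]` is integral over the image of `ℤ[A]`: every element of
`MonoidAlgebra ℤ B` satisfies a monic polynomial with coefficients coming from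
`MonoidAlgebra ℤ A` via the ring homomorphism induced by the inclusion `A → B`. -/
theorem stmt_6 (B : Type*) [CommMonoid B] (A : Submonoid B)
    (halg : ∀ b : B, ∃ n : ℕ, 1 ≤ n ∧ b ^ n ∈ A) :
    ∀ x : MonoidAlgebra ℤ B,
      (MonoidAlgebra.mapDomainRingHom ℤ A.subtype).IsIntegralElem x := by
  letI : Algebra (MonoidAlgebra ℤ A) (MonoidAlgebra ℤ B) :=
    (MonoidAlgebra.mapDomainRingHom ℤ A.subtype).toAlgebra
  have key : ∀ x : MonoidAlgebra ℤ B, IsIntegral (MonoidAlgebra ℤ A) x := by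
    intro x
    induction x using MonoidAlgebra.induction_on with
    | of b =>
        obtain ⟨n, hn, ha⟩ := halg b
        refine ⟨Polynomial.X ^ n - Polynomial.C (MonoidAlgebra.of ℤ A ⟨b ^ n, ha⟩), ?_, ?_⟩
        · exact Polynomial.monic_X_pow_sub_C _ (by omega)
        · have : (MonoidAlgebra.mapDomainRingHom ℤ A.subtype)
              (MonoidAlgebra.of ℤ A ⟨b ^ n, ha⟩) = MonoidAlgebra.of ℤ B b ^ n := by
            simp [MonoidAlgebra.mapDomainRingHom, MonoidAlgebra.of_apply,
              Finsupp.mapDomain_single, ← map_pow]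
          rw [Polynomial.eval₂_sub, Polynomial.eval₂_pow, Polynomial.eval₂_X,
            Polynomial.eval₂_C, RingHom.algebraMap_toAlgebra, this, sub_self]
    | add f g hf hg => exact hf.add hg
    | smul r f hf =>
        have hr : IsIntegral (MonoidAlgebra ℤ A) ((r : MonoidAlgebra ℤ B)) := by
          have : ((r : MonoidAlgebra ℤ B)) =
              algebraMap (MonoidAlgebra ℤ A) (MonoidAlgebra ℤ B) (r : MonoidAlgebra ℤ A) := by
            rw [RingHom.algebraMap_toAlgebra]
            exact (map_intCast (MonoidAlgebra.mapDomainRingHom ℤ A.subtype) r).symm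
          rw [this]
          exact isIntegral_algebraMap
        have := hr.mul hf
        simpa [zsmul_eq_mul] using this
  exact key
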